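/- Let X be a finite dimensional strictly convex and smooth real normed linear space of dimension at least 2, and let T be an invertible continuous linear operator on X. Then T is not a left symmetric point of the space of operators (with the operator norm). -/

import Mathlib

open Metric

section Aux
variable {X Y : Type*} [NormedAddCommGroup X] [NormedSpace ℝ X]
  [NormedAddCommGroup Y] [NormedSpace ℝ Y]

/-- Norm attainment on finite-dimensional domain. -/
lemma exists_norm_attain [FiniteDimensional ℝ X] [Nontrivial X] (T : X →L[ℝ] Y) :
    ∃ x : X, ‖x‖ = 1 ∧ ‖T x‖ = ‖T‖ := by
  obtain ⟨x0, hx0mem, hmax⟩ := (isCompact_sphere (0:X) 1).exists_isMaxOn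
    (NormedSpace.sphere_nonempty.mpr zero_le_one)
    (f := fun x => ‖T x‖) (T.continuous.norm).continuousOn
  have hx0 : ‖x0‖ = 1 := by simpa using mem_sphere_zero_iff_norm.mp hx0mem
  refine ⟨x0, hx0, le_antisymm ?_ ?_⟩
  · calc ‖T x0‖ ≤ ‖T‖ * ‖x0‖ := T.le_opNorm x0
    _ = ‖T‖ := by rw [hx0, mul_one]
  · refine T.opNorm_le_of_unit_norm (norm_nonneg _) fun x hx => ?_
    exact hmax (mem_sphere_zero_iff_norm.mpr hx)

/-- Strict convexity: a norm-one functional equals 1 at most at one unit vector. -/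
lemma unique_norming [StrictConvexSpace ℝ X] {g : X →L[ℝ] ℝ} (hg : ‖g‖ = 1)
    {z x : X} (hz : ‖z‖ = 1) (hgz : g z = 1) (hx : ‖x‖ = 1) (hgx : g x = 1) :
    x = z := by
  by_contra hne
  have hxz : ¬ SameRay ℝ x z := by
    intro hray
    obtain ⟨r₁, r₂, hr₁, hr₂, hrx⟩ := hray.exists_pos
      (by rintro rfl; simp at hx) (by rintro rfl; simp at hz)
    have : r₁ = r₂ := by
      have := congrArg norm hrx
      simpa [norm_smul, hx, hz, abs_of_pos hr₁, abs_of_pos hr₂] using this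
    subst this
    exact hne (smul_right_injective X (ne_of_gt hr₁) hrx)
  have hlt : ‖x + z‖ < 2 := by
    have := norm_add_lt_of_not_sameRay hxz
    rw [hx, hz] at this; linarith
  have : (2:ℝ) ≤ ‖x + z‖ := by
    have h1 : g (x + z) = 2 := by rw [map_add, hgx, hgz]; norm_num
    have h2 : |g (x + z)| ≤ ‖g‖ * ‖x + z‖ := g.le_opNorm (x + z)
    rw [h1, hg, one_mul] at h2
    calc (2:ℝ) = |(2:ℝ)| := by norm_num
    _ ≤ ‖x + z‖ := h2
  linarith

end Aux

section Aux2
variable {X : Type*} [NormedAddCommGroup X] [NormedSpace ℝ X]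

/-- Away from `±z0`, a strictly convex norming functional is bounded away from 1. -/
lemma exists_c [FiniteDimensional ℝ X] [StrictConvexSpace ℝ X]
    {g : X →L[ℝ] ℝ} (hg : ‖g‖ = 1) {z0 : X} (hz0 : ‖z0‖ = 1) (hgz0 : g z0 = 1)
    {ε : ℝ} (hε : 0 < ε) :
    ∃ c, 0 ≤ c ∧ c < 1 ∧ ∀ x, ‖x‖ = 1 → ε ≤ ‖x - z0‖ → ε ≤ ‖x + z0‖ → |g x| ≤ c := by
  set K : Set X := {x | ‖x‖ = 1 ∧ ε ≤ ‖x - z0‖ ∧ ε ≤ ‖x + z0‖} with hKdef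
  by_cases hK : K.Nonempty
  · have hKcl : IsClosed K := by
      have h1 : IsClosed {x : X | ‖x‖ = 1} := isClosed_eq continuous_norm continuous_const
      have h2 : IsClosed {x : X | ε ≤ ‖x - z0‖} :=
        isClosed_le continuous_const ((continuous_id.sub continuous_const).norm)
      have h3 : IsClosed {x : X | ε ≤ ‖x + z0‖} :=
        isClosed_le continuous_const ((continuous_id.add continuous_const).norm)
      have : K = ({x : X | ‖x‖ = 1} ∩ {x : X | ε ≤ ‖x - z0‖}) ∩ {x : X | ε ≤ ‖x + z0‖} := by
        ext x; simp [hKdef, Set.mem_inter_iff, and_assoc]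
      rw [this]; exact (h1.inter h2).inter h3
    have hKsub : K ⊆ Metric.sphere (0:X) 1 := fun x hx =>
      mem_sphere_zero_iff_norm.mpr hx.1
    have hKcomp : IsCompact K := (isCompact_sphere (0:X) 1).of_isClosed_subset hKcl hKsub
    obtain ⟨p, hpK, hpmax⟩ := hKcomp.exists_isMaxOn hK
      (f := fun x => |g x|) (g.continuous.abs).continuousOn
    refine ⟨|g p|, abs_nonneg _, ?_, fun x hx h1 h2 => hpmax ⟨hx, h1, h2⟩⟩
    have hle : |g p| ≤ 1 := by
      have := g.le_opNorm p
      rw [hg, one_mul, hpK.1] at this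
      simpa using this
    rcases lt_or_eq_of_le hle with h | h
    · exact h
    · exfalso
      rcases abs_eq (zero_le_one) |>.mp h with h' | h'
      · have := unique_norming hg hz0 hgz0 hpK.1 h'
        have h0 : ‖p - z0‖ = 0 := by rw [this]; simp
        have := hpK.2.1; rw [h0] at this; linarith
      · have hnp : ‖-p‖ = 1 := by rw [norm_neg]; exact hpK.1
        have hgnp : g (-p) = 1 := by rw [map_neg, h']; ring
        have := unique_norming hg hz0 hgz0 hnp hgnp
        have h0 : ‖p + z0‖ = 0 := by
          have hp : p = -z0 := by rw [← this]; simp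
          rw [hp]; simp
        have := hpK.2.2; rw [h0] at this; linarith
  · refine ⟨0, le_refl _, by norm_num, fun x hx h1 h2 => absurd (⟨hx, h1, h2⟩ : x ∈ K) ?_⟩
    intro h; exact hK ⟨x, h⟩

end Aux2

/-- Birkhoff-James orthogonality: `x ⊥_B y` iff `‖x + λ y‖ ≥ ‖x‖` for all real `λ`. -/
def BJOrth {X : Type*} [NormedAddCommGroup X] [NormedSpace ℝ X] (x y : X) : Prop :=
  ∀ l : ℝ, ‖x‖ ≤ ‖x + l • y‖

/-- `x` is a left symmetric point: `x ⊥_B y` implies `y ⊥_B x` for every `y`. -/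
def LeftSymPoint {X : Type*} [NormedAddCommGroup X] [NormedSpace ℝ X] (x : X) : Prop :=
  ∀ y : X, BJOrth x y → BJOrth y x

/-- A smooth space: every nonzero vector has a unique norming functional. -/
def SmoothSpace (X : Type*) [NormedAddCommGroup X] [NormedSpace ℝ X] : Prop :=
  ∀ x : X, x ≠ 0 → ∃! f : X →L[ℝ] ℝ, ‖f‖ = 1 ∧ f x = ‖x‖

set_option maxHeartbeats 1000000 in
theorem invertible_not_leftSym {X : Type*} [NormedAddCommGroup X]
    [NormedSpace ℝ X] [FiniteDimensional ℝ X] [StrictConvexSpace ℝ X]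
    (hsm : SmoothSpace X) (hdim : 2 ≤ Module.finrank ℝ X)
    (T : X →L[ℝ] X) (hT : Function.Bijective T) :
    ¬ LeftSymPoint T := by
  intro hls
  have hnt : Nontrivial X := by
    have : 0 < Module.finrank ℝ X := by omega
    exact Module.nontrivial_of_finrank_pos this
  obtain ⟨x0, hx0, hTx0⟩ := exists_norm_attain T
  have hx0ne : x0 ≠ 0 := by intro h; rw [h] at hx0; simp at hx0
  -- a nonzero functional vanishing at x0
  obtain ⟨y, hy⟩ : ∃ y, y ∉ Submodule.span ℝ {x0} := by
    by_contra h
    push_neg at h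
    have htop : Submodule.span ℝ ({x0} : Set X) = ⊤ := Submodule.eq_top_iff'.mpr h
    have h1 : Module.finrank ℝ (Submodule.span ℝ ({x0} : Set X)) = 1 :=
      finrank_span_singleton hx0ne
    rw [htop, finrank_top] at h1
    omega
  obtain ⟨f1, hf1n, hf1⟩ := exists_dual_vector ℝ x0 (norm_ne_zero_iff.mpr hx0ne)
  have hf1x0 : f1 x0 = 1 := by rw [hf1, hx0]; norm_num
  set y' := y - (f1 y) • x0 with hy'def
  have hy'ne : y' ≠ 0 := by
    intro h
    apply hy
    have : y = (f1 y) • x0 := by rw [← sub_eq_zero]; exact h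
    rw [this]
    exact Submodule.smul_mem _ _ (Submodule.mem_span_singleton_self x0)
  obtain ⟨f2, hf2n, hf2⟩ := exists_dual_vector ℝ y' (norm_ne_zero_iff.mpr hy'ne)
  set g0 : X →L[ℝ] ℝ := f2 - (f2 x0) • f1 with hg0def
  have hg0x0 : g0 x0 = 0 := by simp [hg0def, hf1x0]
  have hf1y' : f1 y' = 0 := by simp [hy'def, hf1x0]
  have hg0y' : g0 y' = ‖y'‖ := by
    simp only [hg0def, ContinuousLinearMap.sub_apply, ContinuousLinearMap.smul_apply,
      hf1y', smul_zero, sub_zero]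
    exact_mod_cast hf2
  have hg0ne : ‖g0‖ ≠ 0 := by
    intro h
    have hz : g0 = 0 := norm_eq_zero.mp h
    rw [hz] at hg0y'
    simp at hg0y'
    exact hy'ne (norm_eq_zero.mp hg0y'.symm)
  set g : X →L[ℝ] ℝ := ‖g0‖⁻¹ • g0 with hgdef
  have hg : ‖g‖ = 1 := by
    rw [hgdef, norm_smul (‖g0‖⁻¹) g0, norm_inv, norm_norm, inv_mul_cancel₀ hg0ne]
  have hgx0 : g x0 = 0 := by simp [hgdef, hg0x0]
  -- norm-attaining point of g, with positive sign
  obtain ⟨z1, hz1, hgz1⟩ := exists_norm_attain g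
  rw [hg] at hgz1
  have hgz1' : g z1 = 1 ∨ g z1 = -1 := by
    rcases abs_eq (zero_le_one) |>.mp (by rwa [Real.norm_eq_abs] at hgz1) with h | h
    · exact Or.inl h
    · exact Or.inr h
  obtain ⟨z0, hz0, hgz0⟩ : ∃ z : X, ‖z‖ = 1 ∧ g z = 1 := by
    rcases hgz1' with h | h
    · exact ⟨z1, hz1, h⟩
    · exact ⟨-z1, by rwa [norm_neg], by rw [map_neg, h]; ring⟩
  set w : X := T z0 with hwdef
  have hwne : w ≠ 0 := by
    intro h
    have : z0 = 0 := hT.1 (by rw [← hwdef, h, map_zero])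
    rw [this] at hz0; simp at hz0
  have hwpos : 0 < ‖w‖ := norm_pos_iff.mpr hwne
  have hTpos : 0 < ‖T‖ := by
    have := T.le_opNorm z0
    rw [hz0, mul_one] at this
    exact lt_of_lt_of_le hwpos this
  set A : X →L[ℝ] X := g.smulRight w with hAdef
  have hAx : ∀ x : X, A x = g x • w := fun x => rfl
  -- T ⊥_B A
  have hTA : BJOrth T A := by
    intro l
    have h1 : (T + l • A) x0 = T x0 := by
      simp [ContinuousLinearMap.add_apply, ContinuousLinearMap.smul_apply, hAx, hgx0]
    calc ‖T‖ = ‖T x0‖ := hTx0.symm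
    _ = ‖(T + l • A) x0‖ := by rw [h1]
    _ ≤ ‖T + l • A‖ * ‖x0‖ := (T + l • A).le_opNorm x0
    _ = ‖T + l • A‖ := by rw [hx0, mul_one]
  have hAT : BJOrth A T := hls A hTA
  -- parameters
  set ε : ℝ := min (1/4) (‖w‖ / (2 * ‖T‖)) with hεdef
  have hεpos : 0 < ε := lt_min (by norm_num) (div_pos hwpos (by linarith))
  have hε4 : ε ≤ 1/4 := min_le_left _ _
  have hεw : ε * ‖T‖ ≤ ‖w‖ / 2 := by
    have h := min_le_right (1/4 : ℝ) (‖w‖ / (2 * ‖T‖))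
    calc ε * ‖T‖ ≤ (‖w‖ / (2 * ‖T‖)) * ‖T‖ := by
          apply mul_le_mul_of_nonneg_right h (le_of_lt hTpos)
    _ = ‖w‖ / 2 := by field_simp
  obtain ⟨c, hc0, hc1, hcK⟩ := exists_c hg hz0 hgz0 hεpos
  set μ : ℝ := min (1/2) ((1 - c) * ‖w‖ / (2 * ‖T‖)) with hμdef
  have hμpos : 0 < μ := lt_min (by norm_num) (div_pos (mul_pos (by linarith) hwpos) (by linarith))
  have hμhalf : μ ≤ 1/2 := min_le_left _ _
  have hμT : μ * ‖T‖ ≤ (1 - c) * ‖w‖ / 2 := by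
    have h := min_le_right (1/2 : ℝ) ((1 - c) * ‖w‖ / (2 * ‖T‖))
    calc μ * ‖T‖ ≤ ((1 - c) * ‖w‖ / (2 * ‖T‖)) * ‖T‖ :=
          mul_le_mul_of_nonneg_right h (le_of_lt hTpos)
    _ = (1 - c) * ‖w‖ / 2 := by field_simp
  -- the near-z0 bound
  have hnear : ∀ x : X, ‖x‖ = 1 → ‖x - z0‖ < ε → ‖g x • w - μ • T x‖ ≤ ‖w‖ - μ * ‖w‖ / 2 := by
    intro x hx hxz
    have hsplit : g x • w - μ • T x = (g x - μ) • w - μ • (T x - w) := by module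
    have hgxle : g x ≤ 1 := by
      have := g.le_opNorm x
      rw [hg, hx, one_mul, Real.norm_eq_abs] at this
      exact (abs_le.mp this).2
    have hgxge : 1 - ε ≤ g x := by
      have h1 : g z0 - g x = g (z0 - x) := by rw [map_sub]
      have h2 : |g (z0 - x)| ≤ ‖z0 - x‖ := by
        have := g.le_opNorm (z0 - x)
        rwa [hg, one_mul, Real.norm_eq_abs] at this
      have h3 : ‖z0 - x‖ < ε := by rwa [norm_sub_rev]
      have := (abs_le.mp (le_of_lt (lt_of_le_of_lt h2 h3))).2
      rw [← h1] at this
      linarith [hgz0 ▸ this]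
    have habs : |g x - μ| ≤ 1 - μ := by
      rw [abs_le]
      constructor
      · have : (0:ℝ) ≤ g x - μ := by
          have : μ ≤ 1 - ε := by linarith
          linarith
        linarith
      · linarith
    have hTxz : ‖T x - w‖ ≤ ‖T‖ * ε := by
      rw [hwdef, ← map_sub]
      calc ‖T (x - z0)‖ ≤ ‖T‖ * ‖x - z0‖ := T.le_opNorm _
      _ ≤ ‖T‖ * ε := mul_le_mul_of_nonneg_left (le_of_lt hxz) (norm_nonneg T)
    calc ‖g x • w - μ • T x‖ = ‖(g x - μ) • w - μ • (T x - w)‖ := by rw [hsplit]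
    _ ≤ ‖(g x - μ) • w‖ + ‖μ • (T x - w)‖ := norm_sub_le _ _
    _ = |g x - μ| * ‖w‖ + |μ| * ‖T x - w‖ := by rw [norm_smul, norm_smul]; simp [Real.norm_eq_abs]
    _ ≤ (1 - μ) * ‖w‖ + μ * (‖T‖ * ε) := by
        apply add_le_add
        · exact mul_le_mul_of_nonneg_right habs (norm_nonneg w)
        · rw [abs_of_pos hμpos]
          exact mul_le_mul_of_nonneg_left hTxz (le_of_lt hμpos)
    _ ≤ (1 - μ) * ‖w‖ + μ * (‖w‖ / 2) := by
        apply add_le_add le_rfl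
        apply mul_le_mul_of_nonneg_left _ (le_of_lt hμpos)
        calc ‖T‖ * ε = ε * ‖T‖ := by ring
        _ ≤ ‖w‖ / 2 := hεw
    _ = ‖w‖ - μ * ‖w‖ / 2 := by ring
  -- the global bound
  set M : ℝ := max (c * ‖w‖ + μ * ‖T‖) (‖w‖ - μ * ‖w‖ / 2) with hMdef
  have hkey : ‖A + (-μ) • T‖ ≤ M := by
    apply ContinuousLinearMap.opNorm_le_of_unit_norm
    · refine le_max_of_le_right ?_
      have h := mul_le_mul_of_nonneg_right hμhalf (norm_nonneg w)
      linarith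
    · intro x hx
      have happ : (A + (-μ) • T) x = g x • w - μ • T x := by
        simp [ContinuousLinearMap.add_apply, ContinuousLinearMap.smul_apply, hAx]
        module
      rw [happ]
      by_cases h1 : ‖x - z0‖ < ε
      · exact le_max_of_le_right (hnear x hx h1)
      · by_cases h2 : ‖x + z0‖ < ε
        · apply le_max_of_le_right
          have hnx : ‖(-x)‖ = 1 := by rwa [norm_neg]
          have hnxz : ‖(-x) - z0‖ < ε := by
            rw [show -x - z0 = -(x + z0) from by abel, norm_neg]; exact h2
          have heq : g (-x) • w - μ • T (-x) = -(g x • w - μ • T x) := by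
            rw [map_neg, map_neg]; module
          have := hnear (-x) hnx hnxz
          rwa [heq, norm_neg] at this
        · apply le_max_of_le_left
          push_neg at h1 h2
          have hgc : |g x| ≤ c := hcK x hx h1 h2
          calc ‖g x • w - μ • T x‖ ≤ ‖g x • w‖ + ‖μ • T x‖ := norm_sub_le _ _
          _ = |g x| * ‖w‖ + |μ| * ‖T x‖ := by rw [norm_smul, norm_smul]; simp [Real.norm_eq_abs]
          _ ≤ c * ‖w‖ + μ * ‖T‖ := by
              apply add_le_add
              · exact mul_le_mul_of_nonneg_right hgc (norm_nonneg w)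
              · rw [abs_of_pos hμpos]
                apply mul_le_mul_of_nonneg_left _ (le_of_lt hμpos)
                calc ‖T x‖ ≤ ‖T‖ * ‖x‖ := T.le_opNorm x
                _ = ‖T‖ := by rw [hx, mul_one]
  have hM : M < ‖w‖ := by
    apply max_lt
    · have h1 : 0 < (1 - c) * ‖w‖ / 2 := by
        have := mul_pos (show (0:ℝ) < 1 - c by linarith) hwpos
        linarith
      have h2 : c * ‖w‖ + (1 - c) * ‖w‖ / 2 = ‖w‖ - (1 - c) * ‖w‖ / 2 := by ring
      linarith
    · have := mul_pos hμpos hwpos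
      linarith
  have hAw : ‖w‖ ≤ ‖A‖ := by
    have h1 : A z0 = w := by rw [hAx, hgz0, one_smul]
    calc ‖w‖ = ‖A z0‖ := by rw [h1]
    _ ≤ ‖A‖ * ‖z0‖ := A.le_opNorm z0
    _ = ‖A‖ := by rw [hz0, mul_one]
  have := hAT (-μ)
  linarith [lt_of_le_of_lt hkey hM]
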